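/- For integers d ≥ 2s ≥ 2, let 𝓕 be the family of all s-element subsets of {1,…,d}. Then cd₂(𝓕) = d − 2s + 2. -/

import Mathlib

/-- The 2-colorability defect of a family `F` of subsets of `{1,…,d}` (modeled as `Fin d`). -/
noncomputable def cd2 {d : ℕ} (F : Finset (Finset (Fin d))) : ℕ :=
  sInf {k | ∃ X : Finset (Fin d), X.card = k ∧ ∃ c : Fin d → Bool,
    ∀ A ∈ F, Disjoint A X → (∃ i ∈ A, c i = true) ∧ (∃ i ∈ A, c i = false)}

theorem cd2_Kneser {d s : ℕ} (hs : 1 ≤ s) (hd : 2 * s ≤ d) :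
    cd2 (Finset.powersetCard s (Finset.univ : Finset (Fin d))) = d - 2 * s + 2 := by
  set S := {k | ∃ X : Finset (Fin d), X.card = k ∧ ∃ c : Fin d → Bool,
    ∀ A ∈ Finset.powersetCard s (Finset.univ : Finset (Fin d)), Disjoint A X →
      (∃ i ∈ A, c i = true) ∧ (∃ i ∈ A, c i = false)} with hS
  have hn : 2 * s - 2 < d := by omega
  have hmem : d - 2 * s + 2 ∈ S := by
    refine ⟨Finset.univ.filter (fun i : Fin d => 2 * s - 2 ≤ i.val), ?_,
      fun i => decide (i.val < s - 1), ?_⟩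
    · have key : (Finset.univ.filter (fun i : Fin d => ¬ (2 * s - 2 ≤ i.val))) =
          Finset.Iio (⟨2 * s - 2, hn⟩ : Fin d) := by
        ext j
        simp [Fin.lt_def]
        omega
      have h1 := Finset.card_filter_add_card_filter_not
        (s := (Finset.univ : Finset (Fin d))) (p := fun i : Fin d => 2 * s - 2 ≤ i.val)
      rw [key] at h1
      have h2 : (Finset.Iio (⟨2 * s - 2, hn⟩ : Fin d)).card = 2 * s - 2 := by simp
      simp only [Finset.card_univ, Fintype.card_fin] at h1
      omega
    · intro A hA hdisj
      simp only [Finset.mem_powersetCard_univ] at hA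
      have hsub : ∀ i ∈ A, i.val < 2 * s - 2 := by
        intro i hi
        by_contra hge
        exact (Finset.disjoint_left.1 hdisj hi) (by simp; omega)
      constructor
      · by_contra hc
        push_neg at hc
        -- all elements of A have c i = false, i.e. s - 1 ≤ i.val
        have hall : ∀ i ∈ A, s - 1 ≤ i.val ∧ i.val < 2 * s - 2 := by
          intro i hi
          have := hc i hi
          simp at this
          exact ⟨by omega, hsub i hi⟩
        have hcard : A.card ≤ s - 1 := by
          have : A.card ≤ (Finset.range (s - 1)).card := by
            apply Finset.card_le_card_of_injOn (fun i => i.val - (s - 1))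
            · intro i hi
              have := hall i hi
              simp [Finset.mem_range]
              omega
            · intro i hi j hj hij
              have h1 := hall i hi
              have h2 := hall j hj
              simp only at hij
              exact Fin.ext (by omega)
          simpa using this
        omega
      · by_contra hc
        push_neg at hc
        have hall : ∀ i ∈ A, i.val < s - 1 := by
          intro i hi
          have := hc i hi
          simp at this
          omega
        have hcard : A.card ≤ s - 1 := by
          have : A.card ≤ (Finset.range (s - 1)).card := by
            apply Finset.card_le_card_of_injOn (fun i => i.val)
            · intro i hi
              simp [Finset.mem_range]
              exact hall i hi
            · intro i hi j hj hij
              exact Fin.ext hij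
          simpa using this
        omega
  have hlb : ∀ k ∈ S, d - 2 * s + 2 ≤ k := by
    intro k hk
    obtain ⟨X, hX, c, hc⟩ := hk
    by_contra hlt
    push_neg at hlt
    have hk' : X.card ≤ d - 2 * s + 1 := by omega
    set T := Xᶜ with hT
    have hTcard : 2 * s - 1 ≤ T.card := by
      have : T.card = d - X.card := by
        simp [hT, Finset.card_compl]
      omega
    have hsum := Finset.card_filter_add_card_filter_not
      (s := T) (p := fun i => c i = true)
    have hbig : s ≤ (T.filter (fun i => c i = true)).card ∨
        s ≤ (T.filter (fun i => ¬ c i = true)).card := by omega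
    rcases hbig with hb | hb
    · obtain ⟨B, hBsub, hBcard⟩ := Finset.exists_subset_card_eq hb
      have hBmem : B ∈ Finset.powersetCard s (Finset.univ : Finset (Fin d)) := by
        simp [Finset.mem_powersetCard_univ, hBcard]
      have hBdisj : Disjoint B X := by
        apply Finset.disjoint_left.2
        intro i hi hiX
        have := hBsub hi
        simp [hT] at this
        exact this.1 hiX
      obtain ⟨_, i, hi, hif⟩ := hc B hBmem hBdisj
      have := hBsub hi
      simp at this
      rw [this.2] at hif
      exact absurd hif (by simp)
    · obtain ⟨B, hBsub, hBcard⟩ := Finset.exists_subset_card_eq hb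
      have hBmem : B ∈ Finset.powersetCard s (Finset.univ : Finset (Fin d)) := by
        simp [Finset.mem_powersetCard_univ, hBcard]
      have hBdisj : Disjoint B X := by
        apply Finset.disjoint_left.2
        intro i hi hiX
        have := hBsub hi
        simp [hT] at this
        exact this.1 hiX
      obtain ⟨⟨i, hi, hit⟩, _⟩ := hc B hBmem hBdisj
      have := hBsub hi
      simp at this
      rw [this.2] at hit
      exact absurd hit (by simp)
  exact le_antisymm (Nat.sInf_le hmem) (le_csInf ⟨_, hmem⟩ hlb)
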